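/- Let A be a commutative noetherian ring, S a multiplicative subset, J a finite poset, C a full subcategory of Fun(J, ModFG A), and w = Isom_{S,C}. Then in the Gabriel–Zisman localization w⁻¹C, every morphism from x to y is represented by a fraction f/(s·id_x) where f : x → y is a morphism of C and s ∈ S; moreover, the induced functor w⁻¹C → Fun(J, ModFG S⁻¹A) is fully faithful. -/

import Mathlib

section Diagrams

variable (R : Type) [CommRing R] (J : Type) [PartialOrder J]

/-- A `J`-indexed diagram of `R`-modules (a functor from the poset `J` to `R`-modules). -/
structure Diagram where
  M : J → Type
  [acg : ∀ j, AddCommGroup (M j)]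
  [mod : ∀ j, Module R (M j)]
  map : ∀ {j k : J}, j ≤ k → (M j →ₗ[R] M k)
  map_refl : ∀ j : J, map (le_refl j) = LinearMap.id
  map_trans : ∀ {i j k : J} (h : i ≤ j) (h' : j ≤ k),
    map (le_trans h h') = (map h').comp (map h)

attribute [instance] Diagram.acg Diagram.mod

variable {R J}

/-- A family of linear maps is a morphism of diagrams when it is natural. -/
def IsDiagramHom (x y : Diagram R J) (f : ∀ j, x.M j →ₗ[R] y.M j) : Prop :=
  ∀ (j k : J) (h : j ≤ k), (y.map h).comp (f j) = (f k).comp (x.map h)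

/-- Composition of families of linear maps. -/
def diagComp {x y z : Diagram R J} (g : ∀ j, y.M j →ₗ[R] z.M j)
    (f : ∀ j, x.M j →ₗ[R] y.M j) : ∀ j, x.M j →ₗ[R] z.M j :=
  fun j => (g j).comp (f j)

/-- The identity morphism of a diagram. -/
def diagId (x : Diagram R J) : ∀ j, x.M j →ₗ[R] x.M j := fun _ => LinearMap.id

end Diagrams

section Localized

variable {A : Type} [CommRing A] (S : Submonoid A) {J : Type} [PartialOrder J]

/-- The localization of a linear map, as a map between localized modules. -/
noncomputable def locMap {M N : Type} [AddCommGroup M] [Module A M] [AddCommGroup N]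
    [Module A N] (f : M →ₗ[A] N) : LocalizedModule S M →ₗ[A] LocalizedModule S N :=
  IsLocalizedModule.map S (LocalizedModule.mkLinearMap S M)
    (LocalizedModule.mkLinearMap S N) f

/-- The objectwise localization of a diagram of modules. -/
noncomputable def locDiagram (x : Diagram A J) : Diagram A J where
  M j := LocalizedModule S (x.M j)
  map h := locMap S (x.map h)
  map_refl j := by
    show locMap S (x.map (le_refl j)) = LinearMap.id
    rw [x.map_refl j]
    exact IsLocalizedModule.map_id S _
  map_trans h h' := by
    show locMap S (x.map (le_trans h h')) = LinearMap.comp _ _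
    rw [x.map_trans h h']
    exact IsLocalizedModule.map_comp' S _ _ _ _ _

/-- A morphism of diagrams is a weak isomorphism (belongs to `w = Isom_{S,C}`) when its
objectwise localization is an isomorphism, i.e. bijective in each component. -/
noncomputable def IsLocIso (x y : Diagram A J) (f : ∀ j, x.M j →ₗ[A] y.M j) : Prop :=
  ∀ j, Function.Bijective (locMap S (f j))

end Localized

open CategoryTheory

section Cat

variable (R : Type) [CommRing R] (J : Type) [PartialOrder J] (P : Diagram R J → Prop)

/-- The full subcategory of the category of `J`-diagrams of `R`-modules given by `P`. -/
def DiagCat := {x : Diagram R J // P x}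

instance : Category (DiagCat R J P) where
  Hom x y := {f : ∀ j, x.1.M j →ₗ[R] y.1.M j // IsDiagramHom x.1 y.1 f}
  id x := ⟨diagId x.1, fun j k h => by
    ext m; simp [diagId]⟩
  comp {x y z} f g := ⟨diagComp g.1 f.1, fun j k h => by
    ext m
    have hg := LinearMap.congr_fun (g.2 j k h) (f.1 j m)
    have hf := LinearMap.congr_fun (f.2 j k h) m
    simp only [LinearMap.comp_apply, diagComp] at *
    rw [hg, hf]⟩
  id_comp f := Subtype.ext (funext fun j => LinearMap.comp_id _)
  comp_id f := Subtype.ext (funext fun j => LinearMap.id_comp _)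
  assoc f g h := Subtype.ext (funext fun j => (LinearMap.comp_assoc _ _ _).symm)

end Cat

section LocCat

variable {A : Type} [CommRing A] (S : Submonoid A) {J : Type} [PartialOrder J]
variable {P : Diagram A J → Prop}

/-- The class of weak isomorphisms `w = Isom_{S,C}` on the full subcategory `C`. -/
noncomputable def wSet (P : Diagram A J → Prop) : MorphismProperty (DiagCat A J P) :=
  fun x y f => IsLocIso S x.1 y.1 f.1

/-- The morphism `s • id_x`. -/
def sId (s : A) (x : DiagCat A J P) : x ⟶ x :=
  ⟨fun _ => s • LinearMap.id, fun j k h => by ext m; simp⟩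

/-- The localized diagram, as a diagram of modules over `Localization S`. -/
noncomputable def locDiagramExt (x : Diagram A J) : Diagram (Localization S) J where
  M j := LocalizedModule S (x.M j)
  map h := (locMap S (x.map h)).extendScalarsOfIsLocalization S (Localization S)
  map_refl j := by
    show (locMap S (x.map (le_refl j))).extendScalarsOfIsLocalization S (Localization S) =
      LinearMap.id
    rw [x.map_refl j]
    rw [show locMap S (LinearMap.id : x.M j →ₗ[A] x.M j) = LinearMap.id from
      IsLocalizedModule.map_id S _]
    rfl
  map_trans {i j k} h h' := by
    show (locMap S (x.map (le_trans h h'))).extendScalarsOfIsLocalization S (Localization S)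
      = LinearMap.comp _ _
    rw [x.map_trans h h']
    rw [show locMap S ((x.map h').comp (x.map h)) = (locMap S (x.map h')).comp
      (locMap S (x.map h)) from IsLocalizedModule.map_comp' S _ _ _ _ _]
    rfl

/-- The objectwise localization functor from `C` to the category of diagrams of
`S⁻¹A`-modules. -/
noncomputable def locFunctor :
    DiagCat A J P ⥤ DiagCat (Localization S) J (fun _ => True) where
  obj x := ⟨locDiagramExt S x.1, trivial⟩
  map {x y} f := ⟨fun j => (locMap S (f.1 j)).extendScalarsOfIsLocalization S
      (Localization S), by
    intro j k h
    have e : (locMap S (y.1.map h)).comp (locMap S (f.1 j)) =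
        (locMap S (f.1 k)).comp (locMap S (x.1.map h)) := by
      simp only [locMap]
      rw [← IsLocalizedModule.map_comp', ← IsLocalizedModule.map_comp']
      exact congrArg _ (f.2 j k h)
    exact LinearMap.ext fun m => LinearMap.congr_fun e m⟩
  map_id x := Subtype.ext (funext fun j => by
    show (locMap S (LinearMap.id : x.1.M j →ₗ[A] x.1.M j)).extendScalarsOfIsLocalization S
      (Localization S) = LinearMap.id
    rw [show locMap S (LinearMap.id : x.1.M j →ₗ[A] x.1.M j) = LinearMap.id from
      IsLocalizedModule.map_id S _]
    rfl)
  map_comp {x y z} f g := Subtype.ext (funext fun j => by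
    show (locMap S ((g.1 j).comp (f.1 j))).extendScalarsOfIsLocalization S (Localization S)
      = LinearMap.comp _ _
    rw [show locMap S ((g.1 j).comp (f.1 j)) = (locMap S (g.1 j)).comp (locMap S (f.1 j))
      from IsLocalizedModule.map_comp' S _ _ _ _ _]
    rfl)

end LocCat

section Aux

variable {A : Type} [CommRing A] (S : Submonoid A)
variable {J : Type} [PartialOrder J]

lemma exists_common_denom {ι : Type} [Fintype ι] (p : ι → A → Prop)
    (h : ∀ i, ∃ s ∈ S, p i s)
    (stab : ∀ i s t, s ∈ S → t ∈ S → p i s → p i (t * s)) :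
    ∃ s ∈ S, ∀ i, p i s := by
  classical
  choose f hf hp using h
  refine ⟨∏ i, f i, S.prod_mem fun i _ => hf i, fun i => ?_⟩
  rw [← Finset.prod_erase_mul Finset.univ f (Finset.mem_univ i)]
  exact stab i (f i) _ (hf i) (S.prod_mem fun j _ => hf j) (hp i)

section Maps

variable {M N K : Type} [AddCommGroup M] [Module A M] [AddCommGroup N] [Module A N]
  [AddCommGroup K] [Module A K]

lemma locMap_comp (g : N →ₗ[A] K) (f : M →ₗ[A] N) :
    locMap S (g ∘ₗ f) = locMap S g ∘ₗ locMap S f :=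
  IsLocalizedModule.map_comp' S _ _ _ _ _

lemma locMap_id : locMap S (LinearMap.id : M →ₗ[A] M) = LinearMap.id :=
  IsLocalizedModule.map_id S _

lemma locMap_smul (s : A) (f : M →ₗ[A] N) : locMap S (s • f) = s • locMap S f :=
  map_smul (IsLocalizedModule.map S (LocalizedModule.mkLinearMap S M)
    (LocalizedModule.mkLinearMap S N)) s f

lemma sId_bijective {s : A} (hs : s ∈ S) :
    Function.Bijective (locMap S (s • (LinearMap.id : M →ₗ[A] M))) := by
  have h := (Module.End.isUnit_iff _).mp
    (IsLocalizedModule.map_units (LocalizedModule.mkLinearMap S M) ⟨s, hs⟩)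
  have e : (locMap S (s • (LinearMap.id : M →ₗ[A] M))) =
      (algebraMap A (Module.End A (LocalizedModule S M))) s := by
    rw [locMap_smul, locMap_id]
    ext m
    simp [Module.algebraMap_end_apply]
  rw [e]; exact h

end Maps

lemma sId_mem_wSet {P : Diagram A J → Prop} {s : A} (hs : s ∈ S) (x : DiagCat A J P) :
    wSet S P (sId s x) := fun _ => sId_bijective S hs

variable [Fintype J] {P : Diagram A J → Prop}

lemma exists_hom_of_loc_natural [IsNoetherianRing A]
    (hfin : ∀ z, P z → ∀ j, Module.Finite A (z.M j))
    (x y : DiagCat A J P)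
    (ψ : ∀ j, LocalizedModule S (x.1.M j) →ₗ[A] LocalizedModule S (y.1.M j))
    (hnat : ∀ (j k : J) (h : j ≤ k),
      locMap S (y.1.map h) ∘ₗ ψ j = ψ k ∘ₗ locMap S (x.1.map h)) :
    ∃ (f : x ⟶ y) (s : A) (_ : s ∈ S), ∀ j, s • ψ j = locMap S (f.1 j) := by
  classical
  have fin : ∀ j, Module.Finite A (x.1.M j) := hfin _ x.2
  have fp : ∀ j, Module.FinitePresentation A (x.1.M j) := fun j => by
    haveI := fin j
    exact Module.finitePresentation_of_finite A _
  -- componentwise lift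
  have h1 : ∀ j, ∃ s ∈ S, ∃ F : x.1.M j →ₗ[A] y.1.M j, s • ψ j = locMap S F := by
    intro j
    haveI := fp j
    obtain ⟨⟨F, s⟩, hFs⟩ := IsLocalizedModule.surj S
      (IsLocalizedModule.map S (LocalizedModule.mkLinearMap S (x.1.M j))
        (LocalizedModule.mkLinearMap S (y.1.M j))) (ψ j)
    rw [Submonoid.smul_def] at hFs
    exact ⟨s, s.2, F, hFs⟩
  -- common denominator
  have h2 : ∃ s ∈ S, ∀ j, ∃ F, s • ψ j = locMap S F := by
    refine exists_common_denom S _ h1 ?_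
    rintro j s t hs ht ⟨F, hF⟩
    exact ⟨t • F, by rw [mul_smul, hF, locMap_smul]⟩
  obtain ⟨σ, hσ, h3⟩ := h2
  choose G hG using h3
  -- naturality up to a further denominator
  have h4 : ∀ jk : J × J, ∃ u ∈ S, ∀ h : jk.1 ≤ jk.2,
      u • (y.1.map h ∘ₗ G jk.1) = u • (G jk.2 ∘ₗ x.1.map h) := by
    rintro ⟨j, k⟩
    by_cases hjk : j ≤ k
    · have heq : locMap S (y.1.map hjk ∘ₗ G j) = locMap S (G k ∘ₗ x.1.map hjk) := by
        rw [locMap_comp, locMap_comp, ← hG j, ← hG k, LinearMap.comp_smul,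
          LinearMap.smul_comp, hnat j k hjk]
      haveI := fp j
      obtain ⟨c, hc⟩ := IsLocalizedModule.exists_of_eq (S := S)
        (f := IsLocalizedModule.map S (LocalizedModule.mkLinearMap S (x.1.M j))
          (LocalizedModule.mkLinearMap S (y.1.M k)))
        (x₁ := y.1.map hjk ∘ₗ G j) (x₂ := G k ∘ₗ x.1.map hjk) heq
      rw [Submonoid.smul_def, Submonoid.smul_def] at hc
      exact ⟨c, c.2, fun h => hc⟩
    · exact ⟨1, S.one_mem, fun h => absurd h hjk⟩
  have h5 : ∃ u ∈ S, ∀ jk : J × J, ∀ h : jk.1 ≤ jk.2,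
      u • (y.1.map h ∘ₗ G jk.1) = u • (G jk.2 ∘ₗ x.1.map h) := by
    refine exists_common_denom S _ h4 ?_
    intro jk s t hs ht hp h
    rw [mul_smul, mul_smul, hp h]
  obtain ⟨u, hu, h6⟩ := h5
  refine ⟨⟨fun j => u • G j, ?_⟩, u * σ, S.mul_mem hu hσ, fun j => ?_⟩
  · intro j k h
    show y.1.map h ∘ₗ (u • G j) = (u • G k) ∘ₗ x.1.map h
    rw [LinearMap.comp_smul, LinearMap.smul_comp]
    exact h6 (j, k) h
  · show (u * σ) • ψ j = locMap S (u • G j)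
    rw [mul_smul, hG j, ← locMap_smul]

lemma exists_smul_eq_of_locMap_eq [IsNoetherianRing A]
    (hfin : ∀ z, P z → ∀ j, Module.Finite A (z.M j))
    (x y : DiagCat A J P) (f g : x ⟶ y)
    (h : ∀ j, locMap S (f.1 j) = locMap S (g.1 j)) :
    ∃ s ∈ S, ∀ j, s • f.1 j = s • g.1 j := by
  classical
  refine exists_common_denom S (fun j s => s • f.1 j = s • g.1 j) (fun j => ?_) ?_
  · haveI : Module.Finite A (x.1.M j) := hfin _ x.2 j
    haveI : Module.FinitePresentation A (x.1.M j) :=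
      Module.finitePresentation_of_finite A _
    obtain ⟨c, hc⟩ := IsLocalizedModule.exists_of_eq (S := S)
      (f := IsLocalizedModule.map S (LocalizedModule.mkLinearMap S (x.1.M j))
        (LocalizedModule.mkLinearMap S (y.1.M j)))
      (x₁ := f.1 j) (x₂ := g.1 j) (h j)
    rw [Submonoid.smul_def, Submonoid.smul_def] at hc
    exact ⟨c, c.2, hc⟩
  · intro j s t _ _ hp
    rw [mul_smul, mul_smul, hp]

lemma exists_section [IsNoetherianRing A]
    (hfin : ∀ z, P z → ∀ j, Module.Finite A (z.M j))
    (z x : DiagCat A J P) (t : z ⟶ x) (ht : wSet S P t) :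
    ∃ (g : x ⟶ z) (s : A) (_ : s ∈ S), g ≫ t = sId s x := by
  classical
  let E : ∀ j, LocalizedModule S (z.1.M j) ≃ₗ[A] LocalizedModule S (x.1.M j) :=
    fun j => LinearEquiv.ofBijective (locMap S (t.1 j)) (ht j)
  have hnat : ∀ (j k : J) (h : j ≤ k),
      locMap S (z.1.map h) ∘ₗ ((E j).symm : _ →ₗ[A] _) =
        ((E k).symm : _ →ₗ[A] _) ∘ₗ locMap S (x.1.map h) := by
    intro j k h
    apply LinearMap.ext; intro m
    show locMap S (z.1.map h) ((E j).symm m) = (E k).symm (locMap S (x.1.map h) m)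
    apply (E k).injective
    rw [(E k).apply_symm_apply]
    have hcomp : locMap S (x.1.map h) ∘ₗ locMap S (t.1 j) =
        locMap S (t.1 k) ∘ₗ locMap S (z.1.map h) := by
      rw [← locMap_comp, ← locMap_comp, t.2 j k h]
    have h2 := LinearMap.congr_fun hcomp ((E j).symm m)
    simp only [LinearMap.comp_apply] at h2
    calc (E k) (locMap S (z.1.map h) ((E j).symm m))
        = locMap S (t.1 k) (locMap S (z.1.map h) ((E j).symm m)) := rfl
      _ = locMap S (x.1.map h) (locMap S (t.1 j) ((E j).symm m)) := h2.symm
      _ = locMap S (x.1.map h) (E j ((E j).symm m)) := rfl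
      _ = locMap S (x.1.map h) m := by rw [(E j).apply_symm_apply]
  obtain ⟨g₀, s, hs, hg₀⟩ := exists_hom_of_loc_natural S hfin x z
    (fun j => ((E j).symm : _ →ₗ[A] _)) hnat
  have h7 : ∀ j, locMap S ((g₀ ≫ t).1 j) = locMap S ((sId s x : x ⟶ x).1 j) := by
    intro j
    show locMap S (t.1 j ∘ₗ g₀.1 j) = locMap S (s • LinearMap.id)
    rw [locMap_comp, ← hg₀ j, locMap_smul, locMap_id, LinearMap.comp_smul]
    congr 1
    apply LinearMap.ext; intro m
    show locMap S (t.1 j) ((E j).symm m) = m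
    exact (E j).apply_symm_apply m
  obtain ⟨u, hu, h8⟩ := exists_smul_eq_of_locMap_eq S hfin x x (g₀ ≫ t) (sId s x) h7
  refine ⟨sId u x ≫ g₀, u * s, S.mul_mem hu hs, ?_⟩
  apply Subtype.ext; funext j
  have h8j : u • (t.1 j ∘ₗ g₀.1 j) =
      u • (s • (LinearMap.id : x.1.M j →ₗ[A] x.1.M j)) := h8 j
  show t.1 j ∘ₗ (g₀.1 j ∘ₗ (u • LinearMap.id)) = (u * s) • LinearMap.id
  calc t.1 j ∘ₗ (g₀.1 j ∘ₗ (u • LinearMap.id))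
      = u • (t.1 j ∘ₗ g₀.1 j) := by
        rw [LinearMap.comp_smul, LinearMap.comp_id, LinearMap.comp_smul]
    _ = u • (s • (LinearMap.id : x.1.M j →ₗ[A] x.1.M j)) := h8j
    _ = (u * s) • LinearMap.id := (mul_smul u s _).symm

lemma lift_map_Q (hL : (wSet S P).IsInvertedBy (locFunctor S (P := P)))
    {x y : DiagCat A J P} (f : x ⟶ y) :
    (Localization.Construction.lift (locFunctor S (P := P)) hL).map ((wSet S P).Q.map f)
      = (locFunctor S).map f := by
  have h := Functor.congr_hom (Localization.Construction.fac (locFunctor S (P := P)) hL) f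
  refine h.trans ?_
  erw [eqToHom_refl, eqToHom_refl, Category.id_comp, Category.comp_id]

end Aux

/-- in the Gabriel–Zisman localization `w⁻¹C` of a full subcategory `C` of
diagrams of finitely generated modules over a noetherian ring at the class `w` of
morphisms inverted by localization at `S`, every morphism is represented by a fraction
`f/(s • id)` with `s ∈ S`, and the induced functor `w⁻¹C ⥤ Fun(J, Mod S⁻¹A)` is fully
faithful. -/
theorem localization_fraction_representation_and_fullyFaithful
    (A : Type) [CommRing A] [IsNoetherianRing A] (S : Submonoid A)
    (ι : Type) [Fintype ι] (I : ι → Type) [∀ i, Fintype (I i)] [∀ i, LinearOrder (I i)]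
    (P : Diagram A (∀ i, I i) → Prop)
    (hfin : ∀ z, P z → ∀ j, Module.Finite A (z.M j))
    (hL : (wSet S P).IsInvertedBy (locFunctor S (P := P))) :
    -- every morphism of `w⁻¹C` is represented by a fraction `f/(s • id)`
    (∀ (x y : DiagCat A (∀ i, I i) P)
      (φ : (wSet S P).Q.obj x ⟶ (wSet S P).Q.obj y),
      ∃ (f : x ⟶ y) (s : A) (_ : s ∈ S),
        (wSet S P).Q.map (sId s x) ≫ φ = (wSet S P).Q.map f) ∧
    -- the induced functor `w⁻¹C ⥤ Fun(J, Mod S⁻¹A)` is fully faithful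
    (Localization.Construction.lift (locFunctor S (P := P)) hL).Full ∧
    (Localization.Construction.lift (locFunctor S (P := P)) hL).Faithful := by
  classical
  letI : DecidableEq ι := Classical.decEq ι
  letI : Fintype (∀ i, I i) := Pi.instFintype
  -- the fraction representation
  have key : ∀ (x y : DiagCat A (∀ i, I i) P)
      (φ : (wSet S P).Q.obj x ⟶ (wSet S P).Q.obj y),
      ∃ (f : x ⟶ y) (s : A) (_ : s ∈ S),
        (wSet S P).Q.map (sId s x) ≫ φ = (wSet S P).Q.map f := by
    let Pr : CategoryTheory.MorphismProperty (wSet S P).Localization :=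
      fun X Y φ => ∃ (f : X.as.obj ⟶ Y.as.obj) (s : A) (_ : s ∈ S),
        (wSet S P).Q.map (sId s X.as.obj) ≫ φ = (wSet S P).Q.map f
    haveI : Pr.IsStableUnderComposition := by
      constructor
      rintro X Y Z φ ψ ⟨f, s, hs, hf⟩ ⟨g, t, ht, hg⟩
      refine ⟨f ≫ g, t * s, S.mul_mem ht hs, ?_⟩
      have e1 : (sId (t * s) X.as.obj : X.as.obj ⟶ X.as.obj) =
          sId t X.as.obj ≫ sId s X.as.obj := by
        apply Subtype.ext; funext j
        show (t * s) • (LinearMap.id : _ →ₗ[A] _) =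
          (s • LinearMap.id) ∘ₗ (t • LinearMap.id)
        rw [LinearMap.smul_comp, LinearMap.id_comp, smul_smul, mul_comm s t]
      have e2 : (sId t X.as.obj ≫ f : X.as.obj ⟶ Y.as.obj) = f ≫ sId t Y.as.obj := by
        apply Subtype.ext; funext j
        show f.1 j ∘ₗ (t • LinearMap.id) = (t • LinearMap.id) ∘ₗ f.1 j
        rw [LinearMap.comp_smul, LinearMap.comp_id, LinearMap.smul_comp,
          LinearMap.id_comp]
      calc (wSet S P).Q.map (sId (t * s) X.as.obj) ≫ (φ ≫ ψ)
          = (wSet S P).Q.map (sId t X.as.obj) ≫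
              ((wSet S P).Q.map (sId s X.as.obj) ≫ φ) ≫ ψ := by
            rw [e1, Functor.map_comp]; simp only [Category.assoc]; erw [Category.assoc]
        _ = (wSet S P).Q.map (sId t X.as.obj) ≫ (wSet S P).Q.map f ≫ ψ := by rw [hf]; rfl
        _ = (wSet S P).Q.map f ≫ (wSet S P).Q.map (sId t Y.as.obj) ≫ ψ := by
            erw [← Category.assoc, ← Functor.map_comp, e2, Functor.map_comp,
              Category.assoc]
        _ = (show (wSet S P).Q.obj X.as.obj ⟶ Z from
              (wSet S P).Q.map f ≫ (wSet S P).Q.map g) := by rw [hg]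
        _ = (show (wSet S P).Q.obj X.as.obj ⟶ Z from
              (wSet S P).Q.map (f ≫ g)) := ((wSet S P).Q.map_comp _ _).symm
    have hP₁ : ∀ ⦃X Y : DiagCat A (∀ i, I i) P⦄ (f : X ⟶ Y),
        Pr ((wSet S P).Q.map f) := by
      intro X Y f
      exact ⟨sId 1 X ≫ f, 1, S.one_mem, ((wSet S P).Q.map_comp _ _).symm⟩
    have hP₂ : ∀ ⦃X Y : DiagCat A (∀ i, I i) P⦄ (w : X ⟶ Y) (hw : wSet S P w),
        Pr (Localization.Construction.wInv w hw) := by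
      intro z xx w hw
      obtain ⟨g, s, hs, hg⟩ := exists_section S hfin z xx w hw
      refine ⟨g, s, hs, ?_⟩
      show (wSet S P).Q.map (sId s xx) ≫ Localization.Construction.wInv w hw =
        (wSet S P).Q.map g
      have e3 : (wSet S P).Q.map (sId s xx) =
          (wSet S P).Q.map g ≫ (wSet S P).Q.map w := by
        rw [← Functor.map_comp, hg]
      rw [e3, Category.assoc]
      have e4 : (wSet S P).Q.map w ≫ Localization.Construction.wInv w hw = 𝟙 _ :=
        (Localization.Construction.wIso w hw).hom_inv_id
      rw [e4, Category.comp_id]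
    have hPr := Localization.Construction.morphismProperty_eq_top Pr hP₁ hP₂
    intro x y φ
    have hφ : Pr φ := by rw [hPr]; trivial
    exact hφ
  refine ⟨key, ?_, ?_⟩
  · -- Full
    constructor
    intro X Y
    obtain ⟨x, rfl⟩ : ∃ x, X = (wSet S P).Q.obj x := ⟨X.as.obj, rfl⟩
    obtain ⟨y, rfl⟩ : ∃ y, Y = (wSet S P).Q.obj y := ⟨Y.as.obj, rfl⟩
    intro ψ
    let ψ' : (locFunctor S (P := P)).obj x ⟶ (locFunctor S (P := P)).obj y := ψ
    let ψj : ∀ j, LocalizedModule S (x.1.M j) →ₗ[Localization S]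
        LocalizedModule S (y.1.M j) := fun j => ψ'.1 j
    have hnat : ∀ (j k : (∀ i, I i)) (h : j ≤ k),
        locMap S (y.1.map h) ∘ₗ (LinearMap.restrictScalars A (ψj j)) =
          (LinearMap.restrictScalars A (ψj k)) ∘ₗ locMap S (x.1.map h) := by
      intro j k h
      apply LinearMap.ext; intro m
      exact LinearMap.congr_fun (ψ'.2 j k h) m
    obtain ⟨f, s, hs, hf⟩ := exists_hom_of_loc_natural S hfin x y
      (fun j => LinearMap.restrictScalars A (ψj j)) hnat
    haveI : IsIso ((wSet S P).Q.map (sId s x)) :=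
      CategoryTheory.MorphismProperty.Q_inverts (wSet S P) _ (sId_mem_wSet S hs x)
    haveI : IsIso ((locFunctor S (P := P)).map (sId s x)) := hL _ (sId_mem_wSet S hs x)
    have hcomp : (locFunctor S (P := P)).map (sId s x) ≫ ψ' =
        (locFunctor S (P := P)).map f := by
      have comp : ∀ j, (ψj j) ∘ₗ ((locMap S (s • (LinearMap.id : x.1.M j →ₗ[A] x.1.M j))).extendScalarsOfIsLocalization S (Localization S)) =
          (locMap S (f.1 j)).extendScalarsOfIsLocalization S (Localization S) := by
        intro j
        apply LinearMap.ext; intro m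
        show ψj j (locMap S (s • (LinearMap.id : x.1.M j →ₗ[A] x.1.M j)) m)
          = locMap S (f.1 j) m
        calc ψj j (locMap S (s • (LinearMap.id : x.1.M j →ₗ[A] x.1.M j)) m)
            = ψj j (s • m) := by rw [locMap_smul, locMap_id]; rfl
          _ = s • ψj j m := (ψj j).map_smul_of_tower s m
          _ = locMap S (f.1 j) m := LinearMap.congr_fun (hf j) m
      exact Subtype.ext (funext fun j => comp j)
    refine ⟨inv ((wSet S P).Q.map (sId s x)) ≫ (wSet S P).Q.map f, ?_⟩
    rw [Functor.map_comp, Functor.map_inv, IsIso.inv_comp_eq, lift_map_Q S hL f,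
      lift_map_Q S hL (sId s x)]
    exact hcomp.symm
  · -- Faithful
    constructor
    intro X Y
    obtain ⟨x, rfl⟩ : ∃ x, X = (wSet S P).Q.obj x := ⟨X.as.obj, rfl⟩
    obtain ⟨y, rfl⟩ : ∃ y, Y = (wSet S P).Q.obj y := ⟨Y.as.obj, rfl⟩
    intro φ ψ hFφψ
    obtain ⟨f, s, hs, hf⟩ := key x y φ
    obtain ⟨g, t, ht, hg⟩ := key x y ψ
    have comm : (sId t x ≫ sId s x : x ⟶ x) = sId s x ≫ sId t x := by
      apply Subtype.ext; funext j
      show (s • LinearMap.id) ∘ₗ (t • LinearMap.id) =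
        (t • LinearMap.id) ∘ₗ (s • LinearMap.id)
      rw [LinearMap.smul_comp, LinearMap.smul_comp, LinearMap.id_comp,
        LinearMap.id_comp, smul_smul, smul_smul, mul_comm s t]
    have q1 : (wSet S P).Q.map (sId t x) ≫ (wSet S P).Q.map (sId s x) ≫ φ =
        (wSet S P).Q.map (sId t x ≫ f) := by
      rw [hf, ← Functor.map_comp]
    have q2 : (wSet S P).Q.map (sId t x) ≫ (wSet S P).Q.map (sId s x) ≫ ψ =
        (wSet S P).Q.map (sId s x ≫ g) := by
      rw [← Category.assoc, ← Functor.map_comp, comm, Functor.map_comp,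
        Category.assoc, hg, ← Functor.map_comp]
    set F := Localization.Construction.lift (locFunctor S (P := P)) hL with hF
    have e1 : (locFunctor S (P := P)).map (sId t x ≫ f) =
        (locFunctor S (P := P)).map (sId s x ≫ g) := by
      calc (show F.obj ((wSet S P).Q.obj x) ⟶ F.obj ((wSet S P).Q.obj y) from
            (locFunctor S (P := P)).map (sId t x ≫ f))
          = F.map ((wSet S P).Q.map (sId t x ≫ f)) := (lift_map_Q S hL _).symm
        _ = F.map ((wSet S P).Q.map (sId t x) ≫ (wSet S P).Q.map (sId s x) ≫ φ) := by
            rw [q1]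
        _ = F.map ((wSet S P).Q.map (sId t x)) ≫
              F.map ((wSet S P).Q.map (sId s x)) ≫ F.map φ := by
            rw [Functor.map_comp, Functor.map_comp]
        _ = F.map ((wSet S P).Q.map (sId t x)) ≫
              F.map ((wSet S P).Q.map (sId s x)) ≫ F.map ψ := by rw [hFφψ]
        _ = F.map ((wSet S P).Q.map (sId t x) ≫ (wSet S P).Q.map (sId s x) ≫ ψ) := by
            rw [Functor.map_comp, Functor.map_comp]
        _ = F.map ((wSet S P).Q.map (sId s x ≫ g)) := by rw [q2]
        _ = (show F.obj ((wSet S P).Q.obj x) ⟶ F.obj ((wSet S P).Q.obj y) from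
            (locFunctor S (P := P)).map (sId s x ≫ g)) := lift_map_Q S hL _
    have e2 : ∀ j, locMap S ((sId t x ≫ f).1 j) = locMap S ((sId s x ≫ g).1 j) := by
      intro j
      have e1' := congrFun (congrArg Subtype.val e1) j
      apply LinearMap.ext; intro m
      exact LinearMap.congr_fun e1' m
    obtain ⟨u, hu, h8⟩ := exists_smul_eq_of_locMap_eq S hfin x y _ _ e2
    have e3 : (sId u x ≫ sId t x ≫ f : x ⟶ y) = sId u x ≫ sId s x ≫ g := by
      apply Subtype.ext; funext j
      show ((sId t x ≫ f).1 j) ∘ₗ (u • LinearMap.id) =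
        ((sId s x ≫ g).1 j) ∘ₗ (u • LinearMap.id)
      rw [LinearMap.comp_smul, LinearMap.comp_smul, LinearMap.comp_id,
        LinearMap.comp_id]
      exact h8 j
    have e4 : (wSet S P).Q.map (sId u x) ≫ (wSet S P).Q.map (sId t x) ≫
        (wSet S P).Q.map (sId s x) ≫ φ = (wSet S P).Q.map (sId u x) ≫
        (wSet S P).Q.map (sId t x) ≫ (wSet S P).Q.map (sId s x) ≫ ψ := by
      calc (wSet S P).Q.map (sId u x) ≫ (wSet S P).Q.map (sId t x) ≫
            (wSet S P).Q.map (sId s x) ≫ φ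
          = (wSet S P).Q.map (sId u x) ≫ (wSet S P).Q.map (sId t x ≫ f) := by rw [q1]
        _ = (wSet S P).Q.map (sId u x ≫ sId t x ≫ f) := by rw [← Functor.map_comp]
        _ = (wSet S P).Q.map (sId u x ≫ sId s x ≫ g) := by rw [e3]
        _ = (wSet S P).Q.map (sId u x) ≫ (wSet S P).Q.map (sId s x ≫ g) := by
            rw [Functor.map_comp]
        _ = (wSet S P).Q.map (sId u x) ≫ (wSet S P).Q.map (sId t x) ≫
            (wSet S P).Q.map (sId s x) ≫ ψ := by rw [← q2]
    haveI : IsIso ((wSet S P).Q.map (sId u x)) :=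
      CategoryTheory.MorphismProperty.Q_inverts (wSet S P) _ (sId_mem_wSet S hu x)
    haveI : IsIso ((wSet S P).Q.map (sId t x)) :=
      CategoryTheory.MorphismProperty.Q_inverts (wSet S P) _ (sId_mem_wSet S ht x)
    haveI : IsIso ((wSet S P).Q.map (sId s x)) :=
      CategoryTheory.MorphismProperty.Q_inverts (wSet S P) _ (sId_mem_wSet S hs x)
    rw [cancel_epi, cancel_epi, cancel_epi] at e4
    exact e4
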